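/- Let E ∈ ℂ, E ≠ 0, and for integer k let m = m(k) satisfy k² + k − 1 < m ≤ k² + k. Consider the quartic polynomial p_k(λ) = (λ² − k²)((λ − m)² − k⁴) − 2|E|² k⁴. For k sufficiently large, p_k has exactly four distinct roots: two real roots λ₁, λ₂ with λ₁ ~ 2k² and λ₂ ~ −k as k → ∞, and two non-real complex conjugate roots λ₃, λ₄ = conj(λ₃) with Re λ₃ ~ k and Im λ₃ ~ |E|√(k/2) as k → ∞. -/

import Mathlib

set_option maxHeartbeats 4000000

open Filter

noncomputable def zkF (c : ℝ) (m : ℕ → ℝ) (k : ℕ) (x : ℝ) : ℝ :=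
  (x^2 - (k:ℝ)^2) * ((x - m k)^2 - (k:ℝ)^4) - 2*c*(k:ℝ)^4

noncomputable def zkL1 (c : ℝ) (m : ℕ → ℝ) (k : ℕ) : ℝ := sSup {x | zkF c m k x = 0}
noncomputable def zkL2 (c : ℝ) (m : ℕ → ℝ) (k : ℕ) : ℝ := sInf {x | zkF c m k x = 0}
noncomputable def zkB (c : ℝ) (m : ℕ → ℝ) (k : ℕ) : ℝ := 2 * m k - zkL1 c m k - zkL2 c m k

lemma zkF_cont (c : ℝ) (m : ℕ → ℝ) (k : ℕ) : Continuous (zkF c m k) := by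
  unfold zkF; fun_prop

/-- Localization of the extreme real roots. -/
lemma zkKey1 (c : ℝ) (hc : 0 < c) (m : ℕ → ℝ) (k : ℕ)
    (hm1 : (k:ℝ)^2 + k - 1 < m k) (hm2 : m k ≤ (k:ℝ)^2 + k)
    (hk : (c+100)^2 ≤ (k:ℝ)) :
    zkF c m k (zkL1 c m k) = 0 ∧ zkF c m k (zkL2 c m k) = 0 ∧
    m k + (k:ℝ)^2 < zkL1 c m k ∧ zkL1 c m k < m k + (k:ℝ)^2 + 1 ∧
    -(k:ℝ) - c/4 - 1 < zkL2 c m k ∧ zkL2 c m k < -(k:ℝ) := by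
  set kr : ℝ := (k:ℝ) with hkr
  have hk100 : (100:ℝ) ≤ kr := by nlinarith
  have hkpos : (0:ℝ) < kr := by linarith
  have hkc : c < kr := by nlinarith
  -- upper tail positivity
  have tail_hi : ∀ x : ℝ, m k + kr^2 + 1 ≤ x → 0 < zkF c m k x := by
    intro x hx
    have h1 : kr^2 + 1 ≤ x - m k := by linarith
    have h2 : (kr^2+1)^2 ≤ (x - m k)^2 := by nlinarith
    have hB : 2*kr^2 ≤ (x - m k)^2 - kr^4 := by nlinarith
    have hx2 : 2*kr^2 ≤ x := by nlinarith
    have hA : kr^4 ≤ x^2 - kr^2 := by nlinarith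
    have hAB : kr^4 * (2*kr^2) ≤ (x^2 - kr^2) * ((x - m k)^2 - kr^4) := by
      apply mul_le_mul hA hB (by positivity) (by nlinarith)
    have hkc2 : c < kr^2 := by nlinarith
    have hfin : 2*c*kr^4 < kr^4*(2*kr^2) := by
      nlinarith [mul_pos (pow_pos hkpos 4) (sub_pos.mpr hkc2)]
    unfold zkF
    rw [← hkr]
    linarith
  -- lower tail positivity
  have tail_lo : ∀ x : ℝ, x ≤ -kr - c/4 - 1 → 0 < zkF c m k x := by
    intro x hx
    obtain ⟨a, ha⟩ : ∃ a : ℝ, a = -x - kr := ⟨_, rfl⟩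
    have ha1 : c/4 + 1 ≤ a := by rw [ha]; linarith
    have haa : (1:ℝ) ≤ a := by linarith
    have hA : x^2 - kr^2 = a^2 + 2*kr*a := by rw [ha]; ring
    have ht : kr^2 + 2*kr ≤ m k + kr + a := by linarith
    have ht0 : (0:ℝ) ≤ kr^2 + 2*kr := by positivity
    have ht2 : (kr^2 + 2*kr)^2 ≤ (m k + kr + a)^2 := pow_le_pow_left₀ ht0 ht 2
    have hxm : (x - m k)^2 = (m k + kr + a)^2 := by rw [ha]; ring
    have hB : 4*kr^3 ≤ (x - m k)^2 - kr^4 := by rw [hxm]; nlinarith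
    have hApos : 2*kr*a ≤ a^2 + 2*kr*a := by nlinarith
    have hAB : (2*kr*a) * (4*kr^3) ≤ (x^2 - kr^2) * ((x - m k)^2 - kr^4) := by
      rw [hA]
      apply mul_le_mul hApos hB (by positivity) (by nlinarith)
    have hfin : 2*c*kr^4 < (2*kr*a) * (4*kr^3) := by
      nlinarith [mul_le_mul_of_nonneg_left ha1 (le_of_lt (mul_pos (mul_pos (by norm_num : (0:ℝ)<8) hkpos) (pow_pos hkpos 3))), pow_pos hkpos 4]
    unfold zkF
    rw [← hkr]
    linarith
  -- negative values
  have pt_hi : zkF c m k (m k + kr^2) < 0 := by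
    unfold zkF
    rw [← hkr]
    have h0 : (m k + kr^2 - m k)^2 - kr^4 = 0 := by ring
    rw [h0, mul_zero]
    nlinarith [pow_pos hkpos 4]
  have pt_lo : zkF c m k (-kr) < 0 := by
    unfold zkF
    rw [← hkr]
    have h0 : ((-kr)^2 - kr^2) = 0 := by ring
    rw [h0, zero_mul]
    nlinarith [pow_pos hkpos 4]
  -- roots in the two windows
  have hivt1 : ∃ y ∈ Set.Ioo (m k + kr^2) (m k + kr^2 + 1), zkF c m k y = 0 := by
    have hsub := intermediate_value_Ioo (a := m k + kr^2) (b := m k + kr^2 + 1)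
      (by linarith) (zkF_cont c m k).continuousOn
    have h0 : (0:ℝ) ∈ Set.Ioo (zkF c m k (m k + kr^2)) (zkF c m k (m k + kr^2 + 1)) :=
      ⟨pt_hi, tail_hi _ (le_refl _)⟩
    obtain ⟨y, hy, hy0⟩ := hsub h0
    exact ⟨y, hy, hy0⟩
  have hivt2 : ∃ y ∈ Set.Ioo (-kr - c/4 - 1) (-kr), zkF c m k y = 0 := by
    have hsub := intermediate_value_Ioo' (a := -kr - c/4 - 1) (b := -kr)
      (by linarith) (zkF_cont c m k).continuousOn
    have h0 : (0:ℝ) ∈ Set.Ioo (zkF c m k (-kr)) (zkF c m k (-kr - c/4 - 1)) :=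
      ⟨pt_lo, tail_lo _ (le_refl _)⟩
    obtain ⟨y, hy, hy0⟩ := hsub h0
    exact ⟨y, hy, hy0⟩
  obtain ⟨y1, hy1, hy10⟩ := hivt1
  obtain ⟨y2, hy2, hy20⟩ := hivt2
  set S : Set ℝ := {x | zkF c m k x = 0} with hS
  have hSc : IsClosed S := isClosed_eq (zkF_cont c m k) continuous_const
  have hSne : S.Nonempty := ⟨y1, hy10⟩
  have hSbddA : BddAbove S := by
    refine ⟨m k + kr^2 + 1, fun x hx => ?_⟩
    by_contra hcon
    push_neg at hcon
    have := tail_hi x hcon.le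
    simp only [hS, Set.mem_setOf_eq] at hx
    linarith
  have hSbddB : BddBelow S := by
    refine ⟨-kr - c/4 - 1, fun x hx => ?_⟩
    by_contra hcon
    push_neg at hcon
    have := tail_lo x hcon.le
    simp only [hS, Set.mem_setOf_eq] at hx
    linarith
  have hl1mem : zkL1 c m k ∈ S := hSc.csSup_mem hSne hSbddA
  have hl2mem : zkL2 c m k ∈ S := hSc.csInf_mem hSne hSbddB
  have hl1ge : y1 ≤ zkL1 c m k := le_csSup hSbddA hy10
  have hl2le : zkL2 c m k ≤ y2 := csInf_le hSbddB hy20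
  have hl1lt : zkL1 c m k < m k + kr^2 + 1 := by
    by_contra hcon
    push_neg at hcon
    have := tail_hi _ hcon
    simp only [hS, Set.mem_setOf_eq] at hl1mem
    linarith
  have hl2gt : -kr - c/4 - 1 < zkL2 c m k := by
    by_contra hcon
    push_neg at hcon
    have := tail_lo _ hcon
    simp only [hS, Set.mem_setOf_eq] at hl2mem
    linarith
  exact ⟨hl1mem, hl2mem, lt_of_lt_of_le hy1.1 hl1ge, hl1lt, hl2gt,
    lt_of_le_of_lt hl2le hy2.2⟩
lemma zkKey2 (c kr M l1 l2 : ℝ) (hc : 0 < c)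
    (hm1 : kr^2 + kr - 1 < M) (hm2 : M ≤ kr^2 + kr)
    (hk : (c+100)^2 ≤ kr) (hk2 : (c+100)^4 ≤ c*kr)
    (hl1a : M + kr^2 < l1) (hl1b : l1 < M + kr^2 + 1)
    (hl2a : -kr - c/4 - 1 < l2) (hl2b : l2 < -kr) :
    2*kr - 2 < 2*M - l1 - l2 ∧ 2*M - l1 - l2 < 2*kr + c/4 + 1 ∧
    |(((2*M - l1 - l2)/2)^2 - kr^2) * (((2*M - l1 - l2)/2 - M)^2 - kr^4) - 2*c*kr^4
      + 2*c*kr^4| ≤ (2*c+5)^2*kr^3 ∧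
    |((2*M - l1 - l2)/2 - l1) * ((2*M - l1 - l2)/2 - l2) + 4*kr^3| ≤ (2*c+6)*kr^2 ∧
    (((2*M - l1 - l2)/2)^2 - kr^2) * (((2*M - l1 - l2)/2 - M)^2 - kr^4) - 2*c*kr^4 < 0 ∧
    ((2*M - l1 - l2)/2 - l1) * ((2*M - l1 - l2)/2 - l2) < 0 := by
  have hk100 : (100:ℝ) ≤ kr := by nlinarith
  have hkpos : (0:ℝ) < kr := by linarith
  have hkc1 : (c+1)^2 ≤ kr := by nlinarith
  have hkc2 : (c+2)^2 ≤ kr := by nlinarith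
  have hkc3 : 2*(c+2) ≤ kr := by nlinarith
  obtain ⟨b, hb⟩ : ∃ b : ℝ, b = 2*M - l1 - l2 := ⟨_, rfl⟩
  rw [← hb]
  have hb1 : 2*kr - 2 < b := by rw [hb]; linarith
  have hb2 : b < 2*kr + c/4 + 1 := by rw [hb]; linarith
  obtain ⟨w, hw⟩ : ∃ w : ℝ, w = b/2 - kr := ⟨_, rfl⟩
  obtain ⟨g, hg⟩ : ∃ g : ℝ, g = b/2 - M + kr^2 := ⟨_, rfl⟩
  obtain ⟨e1, he1⟩ : ∃ e : ℝ, e = b/2 - l1 + 2*kr^2 := ⟨_, rfl⟩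
  obtain ⟨e2, he2⟩ : ∃ e : ℝ, e = b/2 - l2 - 2*kr := ⟨_, rfl⟩
  have hwb : |w| ≤ c+1 := by rw [abs_le, hw]; constructor <;> [linarith; linarith]
  have hgb : |g| ≤ c+2 := by
    rw [abs_le, hg]
    constructor <;> [linarith; linarith]
  have he1b : |e1| ≤ c+2 := by rw [abs_le, he1]; constructor <;> [linarith; linarith]
  have he2b : |e2| ≤ c+2 := by rw [abs_le, he2]; constructor <;> [linarith; linarith]
  have hNid : ((b/2)^2 - kr^2) * ((b/2 - M)^2 - kr^4) - 2*c*kr^4 + 2*c*kr^4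
      = (w^2 + 2*kr*w) * (g^2 - 2*kr^2*g) := by
    rw [hw, hg]; ring
  have habs1 : |w^2 + 2*kr*w| ≤ (2*c+3)*kr := by
    calc |w^2 + 2*kr*w| ≤ |w^2| + |2*kr*w| := abs_add_le _ _
    _ = w^2 + 2*kr*|w| := by
        rw [abs_of_nonneg (sq_nonneg w), abs_mul, abs_of_nonneg (by linarith : (0:ℝ) ≤ 2*kr)]
    _ ≤ (c+1)^2 + 2*kr*(c+1) := by
        have h1 : w^2 ≤ (c+1)^2 := by rw [← sq_abs]; nlinarith [abs_nonneg w]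
        have h2 : 2*kr*|w| ≤ 2*kr*(c+1) :=
          mul_le_mul_of_nonneg_left hwb (by linarith : (0:ℝ) ≤ 2*kr)
        linarith
    _ ≤ (2*c+3)*kr := by nlinarith
  have habs2 : |g^2 - 2*kr^2*g| ≤ (2*c+5)*kr^2 := by
    calc |g^2 - 2*kr^2*g| ≤ |g^2| + |2*kr^2*g| := abs_sub _ _
    _ = g^2 + 2*kr^2*|g| := by
        rw [abs_of_nonneg (sq_nonneg g), abs_mul,
          abs_of_nonneg (by positivity : (0:ℝ) ≤ 2*kr^2)]
    _ ≤ (c+2)^2 + 2*kr^2*(c+2) := by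
        have h1 : g^2 ≤ (c+2)^2 := by rw [← sq_abs]; nlinarith [abs_nonneg g]
        have h2 : 2*kr^2*|g| ≤ 2*kr^2*(c+2) :=
          mul_le_mul_of_nonneg_left hgb (by positivity : (0:ℝ) ≤ 2*kr^2)
        linarith
    _ ≤ (2*c+5)*kr^2 := by nlinarith [mul_nonneg hkpos.le (by linarith : (0:ℝ) ≤ kr - 1)]
  have hNb : |((b/2)^2 - kr^2) * ((b/2 - M)^2 - kr^4) - 2*c*kr^4 + 2*c*kr^4|
      ≤ (2*c+5)^2*kr^3 := by
    rw [hNid, abs_mul]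
    calc |w^2 + 2*kr*w| * |g^2 - 2*kr^2*g| ≤ ((2*c+3)*kr) * ((2*c+5)*kr^2) :=
          mul_le_mul habs1 habs2 (abs_nonneg _) (by positivity)
    _ ≤ (2*c+5)^2*kr^3 := by
        nlinarith [mul_nonneg (by linarith : (0:ℝ) ≤ 2*(2*c+5)) (le_of_lt (pow_pos hkpos 3))]
  have hDid : (b/2 - l1) * (b/2 - l2) + 4*kr^3 = e1*e2 + 2*kr*e1 - 2*kr^2*e2 := by
    rw [show b/2 - l1 = e1 - 2*kr^2 by rw [he1]; ring,
        show b/2 - l2 = e2 + 2*kr by rw [he2]; ring]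
    ring
  have hDb : |(b/2 - l1) * (b/2 - l2) + 4*kr^3| ≤ (2*c+6)*kr^2 := by
    rw [hDid]
    calc |e1*e2 + 2*kr*e1 - 2*kr^2*e2| ≤ |e1*e2 + 2*kr*e1| + |2*kr^2*e2| := abs_sub _ _
    _ ≤ |e1*e2| + |2*kr*e1| + |2*kr^2*e2| := by linarith [abs_add_le (e1*e2) (2*kr*e1)]
    _ = |e1| * |e2| + 2*kr*|e1| + 2*kr^2*|e2| := by
        simp only [abs_mul, abs_two, abs_of_nonneg hkpos.le, abs_of_nonneg (sq_nonneg kr)]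
    _ ≤ (c+2)*(c+2) + 2*kr*(c+2) + 2*kr^2*(c+2) := by
        have h1 : |e1| * |e2| ≤ (c+2)*(c+2) :=
          mul_le_mul he1b he2b (abs_nonneg e2) (by linarith)
        have h2 : 2*kr*|e1| ≤ 2*kr*(c+2) :=
          mul_le_mul_of_nonneg_left he1b (by linarith : (0:ℝ) ≤ 2*kr)
        have h3 : 2*kr^2*|e2| ≤ 2*kr^2*(c+2) :=
          mul_le_mul_of_nonneg_left he2b (by positivity : (0:ℝ) ≤ 2*kr^2)
        linarith
    _ ≤ (2*c+6)*kr^2 := by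
        have q1 : (c+2)*(c+2) ≤ kr^2 := by
          nlinarith [mul_nonneg hkpos.le (by linarith : (0:ℝ) ≤ kr - 1)]
        have q2 : 2*kr*(c+2) ≤ kr^2 := by
          nlinarith [mul_le_mul_of_nonneg_left hkc3 hkpos.le]
        have q3 : 2*kr^2*(c+2) ≤ (2*c+4)*kr^2 := le_of_eq (by ring)
        linarith
  have hcontrN : (2*c+5)^2*kr^3 < 2*c*kr^4 := by
    have h0 : 2*c+5 < (c+100)^2 := by nlinarith
    have h1 : (2*c+5)^2 < (c+100)^4 := by
      calc (2*c+5)^2 < ((c+100)^2)^2 := by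
            apply pow_lt_pow_left₀ h0 (by linarith)
            norm_num
      _ = (c+100)^4 := by ring
    have h2 : (2*c+5)^2 < c*kr := lt_of_lt_of_le h1 hk2
    have h3 : (2*c+5)^2*kr^3 < (c*kr)*kr^3 :=
      mul_lt_mul_of_pos_right h2 (pow_pos hkpos 3)
    calc (2*c+5)^2*kr^3 < (c*kr)*kr^3 := h3
    _ = c*kr^4 := by ring
    _ ≤ 2*c*kr^4 := by linarith [mul_pos hc (pow_pos hkpos 4)]
  have hNneg : ((b/2)^2 - kr^2) * ((b/2 - M)^2 - kr^4) - 2*c*kr^4 < 0 := by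
    have := (abs_le.mp hNb).2
    linarith
  have hcontrD : (2*c+6)*kr^2 < 4*kr^3 := by
    nlinarith [sq_nonneg kr, mul_pos hkpos hkpos]
  have hDneg : (b/2 - l1) * (b/2 - l2) < 0 := by
    have := (abs_le.mp hDb).2
    linarith
  exact ⟨hb1, hb2, hNb, hDb, hNneg, hDneg⟩
noncomputable def zkD (c : ℝ) (m : ℕ → ℝ) (k : ℕ) : ℝ :=
  (zkB c m k / 2 - zkL1 c m k) * (zkB c m k / 2 - zkL2 c m k)
noncomputable def zkN (c : ℝ) (m : ℕ → ℝ) (k : ℕ) : ℝ := zkF c m k (zkB c m k / 2)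
noncomputable def zkDisc (c : ℝ) (m : ℕ → ℝ) (k : ℕ) : ℝ := zkN c m k / zkD c m k
noncomputable def zkL3 (c : ℝ) (m : ℕ → ℝ) (k : ℕ) : ℂ :=
  Complex.ofReal (zkB c m k / 2) + Complex.ofReal (Real.sqrt (zkDisc c m k)) * Complex.I

lemma zkL3_re (c : ℝ) (m : ℕ → ℝ) (k : ℕ) : (zkL3 c m k).re = zkB c m k / 2 := by
  simp [zkL3]

lemma zkL3_im (c : ℝ) (m : ℕ → ℝ) (k : ℕ) : (zkL3 c m k).im = Real.sqrt (zkDisc c m k) := by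
  simp [zkL3]

lemma zkL3_conj (c : ℝ) (m : ℕ → ℝ) (k : ℕ) :
    starRingEnd ℂ (zkL3 c m k)
      = Complex.ofReal (zkB c m k / 2) - Complex.ofReal (Real.sqrt (zkDisc c m k)) * Complex.I := by
  have h2 : (starRingEnd ℂ) (2:ℂ) = 2 := Complex.conj_ofNat 2
  simp [zkL3, Complex.ext_iff, h2]

lemma zkTendsto {g : ℕ → ℝ} {L A : ℝ}
    (h : ∀ᶠ k in atTop, |g k - L| ≤ A / (k:ℝ)) : Tendsto g atTop (nhds L) := by
  have h0 : Tendsto (fun k : ℕ => A / (k:ℝ)) atTop (nhds 0) :=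
    tendsto_const_div_atTop_nhds_zero_nat A
  have h1 : Tendsto (fun k : ℕ => g k - L) atTop (nhds 0) := by
    apply squeeze_zero_norm' _ h0
    simpa [Real.norm_eq_abs] using h
  have h2 := h1.add_const L
  simpa using h2

lemma zkN_eq (c : ℝ) (m : ℕ → ℝ) (k : ℕ) :
    zkN c m k = (((2 * m k - zkL1 c m k - zkL2 c m k)/2)^2 - (k:ℝ)^2)
      * (((2 * m k - zkL1 c m k - zkL2 c m k)/2 - m k)^2 - (k:ℝ)^4) - 2*c*(k:ℝ)^4 := rfl

lemma zkD_eq (c : ℝ) (m : ℕ → ℝ) (k : ℕ) :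
    zkD c m k = ((2 * m k - zkL1 c m k - zkL2 c m k)/2 - zkL1 c m k)
      * ((2 * m k - zkL1 c m k - zkL2 c m k)/2 - zkL2 c m k) := rfl

lemma zkFacts (c : ℝ) (hc : 0 < c) (m : ℕ → ℝ) (k : ℕ)
    (hm1 : (k:ℝ)^2 + k - 1 < m k) (hm2 : m k ≤ (k:ℝ)^2 + k)
    (hkc : (c+100)^2 ≤ (k:ℝ)) (hkc2 : (c+100)^4 ≤ c*(k:ℝ)) :
    zkF c m k (zkL1 c m k) = 0 ∧ zkF c m k (zkL2 c m k) = 0 ∧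
    m k + (k:ℝ)^2 < zkL1 c m k ∧ zkL1 c m k < m k + (k:ℝ)^2 + 1 ∧
    -(k:ℝ) - c/4 - 1 < zkL2 c m k ∧ zkL2 c m k < -(k:ℝ) ∧
    2*(k:ℝ) - 2 < zkB c m k ∧ zkB c m k < 2*(k:ℝ) + c/4 + 1 ∧
    |zkN c m k + 2*c*(k:ℝ)^4| ≤ (2*c+5)^2*(k:ℝ)^3 ∧
    |zkD c m k + 4*(k:ℝ)^3| ≤ (2*c+6)*(k:ℝ)^2 ∧
    zkN c m k < 0 ∧ zkD c m k < 0 ∧ 0 < zkDisc c m k := by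
  obtain ⟨w1, w2, w3, w4, w5, w6⟩ := zkKey1 c hc m k hm1 hm2 hkc
  have H2 := zkKey2 c (k:ℝ) (m k) (zkL1 c m k) (zkL2 c m k) hc
    hm1 hm2 hkc hkc2 w3 w4 w5 w6
  obtain ⟨v1, v2, v3, v4, v5, v6⟩ := H2
  have hNv3 : |zkN c m k + 2*c*(k:ℝ)^4| ≤ (2*c+5)^2*(k:ℝ)^3 := by
    rw [zkN_eq]
    exact v3
  have hDv4 : |zkD c m k + 4*(k:ℝ)^3| ≤ (2*c+6)*(k:ℝ)^2 := by
    rw [zkD_eq]; exact v4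
  have hNneg : zkN c m k < 0 := by rw [zkN_eq]; exact v5
  have hDneg : zkD c m k < 0 := by rw [zkD_eq]; exact v6
  have hdisc : 0 < zkDisc c m k := by
    rw [show zkDisc c m k = (-(zkN c m k))/(-(zkD c m k)) from by unfold zkDisc; ring]
    exact div_pos (by linarith) (by linarith)
  exact ⟨w1, w2, w3, w4, w5, w6, v1, v2, hNv3, hDv4, hNneg, hDneg, hdisc⟩

theorem stmt5 (E : ℂ) (hE : E ≠ 0) (m : ℕ → ℝ)
    (hm : ∀ k : ℕ, (k : ℝ) ^ 2 + k - 1 < m k ∧ m k ≤ (k : ℝ) ^ 2 + k) :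
    ∃ k₀ : ℕ, ∃ l₁ l₂ l₃ : ℕ → ℂ,
      (∀ k : ℕ, k₀ ≤ k →
        (l₁ k).im = 0 ∧ (l₂ k).im = 0 ∧ (l₃ k).im ≠ 0 ∧
        [l₁ k, l₂ k, l₃ k, starRingEnd ℂ (l₃ k)].Pairwise (· ≠ ·) ∧
        (∀ lam : ℂ,
          (lam ^ 2 - (k : ℂ) ^ 2) * ((lam - ((m k : ℝ) : ℂ)) ^ 2 - (k : ℂ) ^ 4) -
              2 * ((‖E‖ : ℝ) : ℂ) ^ 2 * (k : ℂ) ^ 4 = 0 ↔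
            lam = l₁ k ∨ lam = l₂ k ∨ lam = l₃ k ∨ lam = starRingEnd ℂ (l₃ k))) ∧
      Tendsto (fun k : ℕ => l₁ k / (2 * (k : ℂ) ^ 2)) atTop (nhds 1) ∧
      Tendsto (fun k : ℕ => l₂ k / (-(k : ℂ))) atTop (nhds 1) ∧
      Tendsto (fun k : ℕ => (l₃ k).re / (k : ℝ)) atTop (nhds 1) ∧
      Tendsto (fun k : ℕ => (l₃ k).im / (‖E‖ * Real.sqrt ((k : ℝ) / 2)))
        atTop (nhds 1) := by
  obtain ⟨c, hcdef⟩ : ∃ c : ℝ, c = ‖E‖ ^ 2 := ⟨_, rfl⟩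
  have hc : 0 < c := by rw [hcdef]; exact pow_pos (norm_pos_iff.mpr hE) 2
  obtain ⟨K1, hK1⟩ := exists_nat_ge ((c+100)^2)
  obtain ⟨K2, hK2⟩ := exists_nat_ge ((c+100)^4 / c)
  have hbase : ∀ k : ℕ, max (max K1 K2) 1 ≤ k →
      (c+100)^2 ≤ (k:ℝ) ∧ (c+100)^4 ≤ c*(k:ℝ) ∧ (1:ℝ) ≤ (k:ℝ) := by
    intro k hk
    have hk1n : K1 ≤ k := le_trans (le_trans (le_max_left _ _) (le_max_left _ _)) hk
    have hk2n : K2 ≤ k := le_trans (le_trans (le_max_right _ _) (le_max_left _ _)) hk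
    have hk3n : 1 ≤ k := le_trans (le_max_right _ _) hk
    refine ⟨le_trans hK1 (Nat.cast_le.mpr hk1n), ?_, by exact_mod_cast hk3n⟩
    have h1 : (c+100)^4 / c ≤ (k:ℝ) := le_trans hK2 (Nat.cast_le.mpr hk2n)
    rw [div_le_iff₀ hc] at h1
    linarith
  have hfacts : ∀ k : ℕ, max (max K1 K2) 1 ≤ k →
      zkF c m k (zkL1 c m k) = 0 ∧ zkF c m k (zkL2 c m k) = 0 ∧
      m k + (k:ℝ)^2 < zkL1 c m k ∧ zkL1 c m k < m k + (k:ℝ)^2 + 1 ∧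
      -(k:ℝ) - c/4 - 1 < zkL2 c m k ∧ zkL2 c m k < -(k:ℝ) ∧
      2*(k:ℝ) - 2 < zkB c m k ∧ zkB c m k < 2*(k:ℝ) + c/4 + 1 ∧
      |zkN c m k + 2*c*(k:ℝ)^4| ≤ (2*c+5)^2*(k:ℝ)^3 ∧
      |zkD c m k + 4*(k:ℝ)^3| ≤ (2*c+6)*(k:ℝ)^2 ∧
      zkN c m k < 0 ∧ zkD c m k < 0 ∧ 0 < zkDisc c m k ∧
      (c+100)^2 ≤ (k:ℝ) ∧ (1:ℝ) ≤ (k:ℝ) := by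
    intro k hk
    obtain ⟨hb1, hb2, hb3⟩ := hbase k hk
    obtain ⟨w1, w2, w3, w4, w5, w6, v1, v2, v3, v4, v5, v6, v7⟩ :=
      zkFacts c hc m k (hm k).1 (hm k).2 hb1 hb2
    exact ⟨w1, w2, w3, w4, w5, w6, v1, v2, v3, v4, v5, v6, v7, hb1, hb3⟩
  clear hK1 hK2 hbase
  refine ⟨max (max K1 K2) 1, fun k => ((zkL1 c m k : ℝ) : ℂ),
    fun k => ((zkL2 c m k : ℝ) : ℂ), zkL3 c m, ?_, ?_, ?_, ?_, ?_⟩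
  · intro k hk
    obtain ⟨hf1, hf2, hl1a, hl1b, hl2a, hl2b, hb1, hb2, hNb, hDb, hNneg, hDneg,
      hdisc, hkcr, hk1r⟩ := hfacts k hk
    beta_reduce
    have hm1 := (hm k).1
    have hm2 := (hm k).2
    have hkc : c < (k:ℝ) := by nlinarith
    have hl1pos : 0 < zkL1 c m k := by nlinarith
    have hl2neg : zkL2 c m k < 0 := by linarith
    have hspos : 0 < Real.sqrt (zkDisc c m k) := Real.sqrt_pos.mpr hdisc
    have hs2 : Real.sqrt (zkDisc c m k) ^ 2 = zkDisc c m k := Real.sq_sqrt hdisc.le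
    have hDne : zkD c m k ≠ 0 := ne_of_lt hDneg
    have hNd : zkD c m k * zkDisc c m k = zkN c m k := by
      unfold zkDisc; field_simp
    have hbhalf : (k:ℝ) - 1 < zkB c m k / 2 := by linarith
    have hbhalf2 : zkB c m k / 2 < (k:ℝ) + c/8 + 1/2 := by linarith
    have hl1b2 : zkB c m k / 2 < zkL1 c m k := by nlinarith
    have hl2b2 : zkL2 c m k < zkB c m k / 2 := by linarith
    -- cast lemma
    have hPc : ∀ x : ℝ, ((x:ℂ) ^ 2 - (k : ℂ) ^ 2) * (((x:ℂ) - ((m k : ℝ) : ℂ)) ^ 2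
        - (k : ℂ) ^ 4) - 2 * ((‖E‖ : ℝ) : ℂ) ^ 2 * (k : ℂ) ^ 4
        = ((zkF c m k x : ℝ) : ℂ) := by
      intro x
      unfold zkF
      rw [hcdef]
      push_cast
      ring
    -- quadratic factor identity
    have hquad : ∀ lam : ℂ, (lam - zkL3 c m k) * (lam - starRingEnd ℂ (zkL3 c m k))
        = lam ^ 2 - ((zkB c m k : ℝ) : ℂ) * lam
          + (((zkB c m k / 2)^2 + zkDisc c m k : ℝ) : ℂ) := by
      intro lam
      rw [zkL3_conj]
      rw [show zkL3 c m k = Complex.ofReal (zkB c m k / 2)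
        + Complex.ofReal (Real.sqrt (zkDisc c m k)) * Complex.I from rfl]
      have hs2C : ((Real.sqrt (zkDisc c m k) : ℝ) : ℂ) ^ 2 = ((zkDisc c m k : ℝ) : ℂ) := by
        rw [← Complex.ofReal_pow, hs2]
      push_cast
      rw [← hs2C]
      linear_combination (-((Real.sqrt (zkDisc c m k) : ℝ) : ℂ)^2) * Complex.I_sq
    have hbC : ((zkB c m k : ℝ) : ℂ) = 2*((m k : ℝ):ℂ) - ((zkL1 c m k : ℝ):ℂ)
        - ((zkL2 c m k : ℝ):ℂ) := by
      unfold zkB; push_cast; ring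
    obtain ⟨α, β, γ, hid⟩ : ∃ α β γ : ℂ, ∀ lam : ℂ,
        ((lam ^ 2 - (k : ℂ) ^ 2) * ((lam - ((m k : ℝ) : ℂ)) ^ 2 - (k : ℂ) ^ 4) -
           2 * ((‖E‖ : ℝ) : ℂ) ^ 2 * (k : ℂ) ^ 4)
          - (lam - ((zkL1 c m k : ℝ):ℂ)) * (lam - ((zkL2 c m k : ℝ):ℂ))
            * (lam ^ 2 - ((zkB c m k : ℝ) : ℂ) * lam
               + (((zkB c m k / 2)^2 + zkDisc c m k : ℝ) : ℂ))
          = α * lam ^ 2 + β * lam + γ := by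
      refine ⟨((m k : ℝ):ℂ)^2 - (k:ℂ)^4 - (k:ℂ)^2
          - ((((zkB c m k / 2)^2 + zkDisc c m k : ℝ) : ℂ)
            + ((zkL1 c m k : ℝ):ℂ)*((zkL2 c m k : ℝ):ℂ)
            + (((zkL1 c m k : ℝ):ℂ) + ((zkL2 c m k : ℝ):ℂ))*((zkB c m k : ℝ) : ℂ)),
        2*((m k : ℝ):ℂ)*(k:ℂ)^2
          + ((((zkL1 c m k : ℝ):ℂ) + ((zkL2 c m k : ℝ):ℂ))
              * (((zkB c m k / 2)^2 + zkDisc c m k : ℝ) : ℂ)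
            + ((zkL1 c m k : ℝ):ℂ)*((zkL2 c m k : ℝ):ℂ)*((zkB c m k : ℝ) : ℂ)),
        -(k:ℂ)^2*(((m k : ℝ):ℂ)^2 - (k:ℂ)^4) - 2 * ((‖E‖ : ℝ) : ℂ) ^ 2 * (k : ℂ) ^ 4
          - ((zkL1 c m k : ℝ):ℂ)*((zkL2 c m k : ℝ):ℂ)
            * (((zkB c m k / 2)^2 + zkDisc c m k : ℝ) : ℂ), ?_⟩
      intro lam
      rw [hbC]
      ring
    have E1 : α * ((zkL1 c m k : ℝ):ℂ)^2 + β * ((zkL1 c m k : ℝ):ℂ) + γ = 0 := by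
      have h := hid ((zkL1 c m k : ℝ):ℂ)
      rw [hPc (zkL1 c m k), hf1] at h
      rw [← h]
      push_cast
      ring
    have E2 : α * ((zkL2 c m k : ℝ):ℂ)^2 + β * ((zkL2 c m k : ℝ):ℂ) + γ = 0 := by
      have h := hid ((zkL2 c m k : ℝ):ℂ)
      rw [hPc (zkL2 c m k), hf2] at h
      rw [← h]
      push_cast
      ring
    have hrz : zkF c m k (zkB c m k / 2)
        - (zkB c m k / 2 - zkL1 c m k) * (zkB c m k / 2 - zkL2 c m k)
          * ((zkB c m k / 2)^2 - zkB c m k * (zkB c m k / 2)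
             + ((zkB c m k / 2)^2 + zkDisc c m k)) = 0 := by
      have h1 : (zkB c m k / 2)^2 - zkB c m k * (zkB c m k / 2)
          + ((zkB c m k / 2)^2 + zkDisc c m k) = zkDisc c m k := by ring
      rw [h1]
      show zkN c m k - zkD c m k * zkDisc c m k = 0
      rw [hNd]
      ring
    have E3 : α * ((zkB c m k / 2 : ℝ):ℂ)^2 + β * ((zkB c m k / 2 : ℝ):ℂ) + γ = 0 := by
      have h := hid ((zkB c m k / 2 : ℝ):ℂ)
      rw [hPc (zkB c m k / 2)] at h
      rw [← h]
      have hrzC := congrArg Complex.ofReal hrz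
      push_cast at hrzC ⊢
      linear_combination hrzC
    have hne12 : ((zkL1 c m k : ℝ):ℂ) - ((zkL2 c m k : ℝ):ℂ) ≠ 0 := by
      rw [sub_ne_zero]
      intro h
      rw [Complex.ofReal_inj] at h
      linarith
    have hne13 : ((zkL1 c m k : ℝ):ℂ) - ((zkB c m k / 2 : ℝ):ℂ) ≠ 0 := by
      rw [sub_ne_zero]
      intro h
      rw [Complex.ofReal_inj] at h
      linarith
    have hne23 : ((zkL2 c m k : ℝ):ℂ) - ((zkB c m k / 2 : ℝ):ℂ) ≠ 0 := by
      rw [sub_ne_zero]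
      intro h
      rw [Complex.ofReal_inj] at h
      linarith
    have d1 : (((zkL1 c m k : ℝ):ℂ) - ((zkL2 c m k : ℝ):ℂ))
        * (α * (((zkL1 c m k : ℝ):ℂ) + ((zkL2 c m k : ℝ):ℂ)) + β) = 0 := by
      linear_combination E1 - E2
    have hAB1 : α * (((zkL1 c m k : ℝ):ℂ) + ((zkL2 c m k : ℝ):ℂ)) + β = 0 := by
      rcases mul_eq_zero.mp d1 with h | h
      · exact absurd h hne12
      · exact h
    have d2 : (((zkL1 c m k : ℝ):ℂ) - ((zkB c m k / 2 : ℝ):ℂ))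
        * (α * (((zkL1 c m k : ℝ):ℂ) + ((zkB c m k / 2 : ℝ):ℂ)) + β) = 0 := by
      linear_combination E1 - E3
    have hAB2 : α * (((zkL1 c m k : ℝ):ℂ) + ((zkB c m k / 2 : ℝ):ℂ)) + β = 0 := by
      rcases mul_eq_zero.mp d2 with h | h
      · exact absurd h hne13
      · exact h
    have d3 : (((zkL2 c m k : ℝ):ℂ) - ((zkB c m k / 2 : ℝ):ℂ)) * α = 0 := by
      linear_combination hAB1 - hAB2
    have hα : α = 0 := by
      rcases mul_eq_zero.mp d3 with h | h
      · exact absurd h hne23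
      · exact h
    have hβ : β = 0 := by
      rw [hα] at hAB1
      simpa using hAB1
    have hγ : γ = 0 := by
      rw [hα, hβ] at E1
      simpa using E1
    have hfact : ∀ lam : ℂ,
        (lam ^ 2 - (k : ℂ) ^ 2) * ((lam - ((m k : ℝ) : ℂ)) ^ 2 - (k : ℂ) ^ 4) -
           2 * ((‖E‖ : ℝ) : ℂ) ^ 2 * (k : ℂ) ^ 4
        = (lam - ((zkL1 c m k : ℝ):ℂ)) * (lam - ((zkL2 c m k : ℝ):ℂ))
          * ((lam - zkL3 c m k) * (lam - starRingEnd ℂ (zkL3 c m k))) := by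
      intro lam
      have h := hid lam
      rw [hα, hβ, hγ] at h
      rw [hquad lam]
      linear_combination h
    refine ⟨Complex.ofReal_im _, Complex.ofReal_im _, ?_, ?_, ?_⟩
    · rw [zkL3_im]
      exact ne_of_gt hspos
    · -- pairwise distinctness
      have n12 : ((zkL1 c m k : ℝ):ℂ) ≠ ((zkL2 c m k : ℝ):ℂ) := by
        intro h; exact hne12 (sub_eq_zero.mpr h)
      have n13 : ((zkL1 c m k : ℝ):ℂ) ≠ zkL3 c m k := by
        intro h
        have := congrArg Complex.im h
        rw [Complex.ofReal_im, zkL3_im] at this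
        linarith
      have n14 : ((zkL1 c m k : ℝ):ℂ) ≠ starRingEnd ℂ (zkL3 c m k) := by
        intro h
        have := congrArg Complex.im h
        rw [Complex.ofReal_im, Complex.conj_im, zkL3_im] at this
        linarith
      have n23 : ((zkL2 c m k : ℝ):ℂ) ≠ zkL3 c m k := by
        intro h
        have := congrArg Complex.im h
        rw [Complex.ofReal_im, zkL3_im] at this
        linarith
      have n24 : ((zkL2 c m k : ℝ):ℂ) ≠ starRingEnd ℂ (zkL3 c m k) := by
        intro h
        have := congrArg Complex.im h
        rw [Complex.ofReal_im, Complex.conj_im, zkL3_im] at this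
        linarith
      have n34 : zkL3 c m k ≠ starRingEnd ℂ (zkL3 c m k) := by
        intro h
        have := congrArg Complex.im h
        rw [Complex.conj_im, zkL3_im] at this
        linarith
      simp only [List.pairwise_cons, List.mem_cons, List.mem_singleton,
        List.not_mem_nil, List.Pairwise.nil]
      constructor
      · rintro z (rfl | rfl | rfl | h)
        · exact n12
        · exact n13
        · exact n14
        · simp at h
      constructor
      · rintro z (rfl | rfl | h)
        · exact n23
        · exact n24
        · simp at h
      constructor
      · rintro z (rfl | h)
        · exact n34
        · simp at h
      constructor
      · rintro z h
        simp at h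
      · trivial
    · intro lam
      rw [hfact lam, mul_eq_zero, mul_eq_zero, mul_eq_zero,
        sub_eq_zero, sub_eq_zero, sub_eq_zero, sub_eq_zero]
      tauto
  · have hreal : Tendsto (fun k : ℕ => zkL1 c m k / (2*(k:ℝ)^2)) atTop (nhds 1) := by
      apply zkTendsto (A := 1)
      filter_upwards [eventually_ge_atTop (max (max K1 K2) 1)] with k hk
      obtain ⟨hf1, hf2, hl1a, hl1b, hl2a, hl2b, hb1, hb2, hNb, hDb, hNneg, hDneg,
        hdisc, hkcr, hk1r⟩ := hfacts k hk
      have hm1 := (hm k).1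
      have hm2 := (hm k).2
      have h2k : (0:ℝ) < 2*(k:ℝ)^2 := by positivity
      have hkpos : (0:ℝ) < (k:ℝ) := by linarith
      rw [show zkL1 c m k / (2*(k:ℝ)^2) - 1 = (zkL1 c m k - 2*(k:ℝ)^2)/(2*(k:ℝ)^2) from
        by field_simp]
      rw [abs_div, abs_of_pos h2k, div_le_div_iff₀ h2k hkpos]
      have habs : |zkL1 c m k - 2*(k:ℝ)^2| ≤ (k:ℝ) + 1 := by
        rw [abs_le]
        constructor <;> nlinarith
      nlinarith [abs_nonneg (zkL1 c m k - 2*(k:ℝ)^2)]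
    have hC : Tendsto (fun k : ℕ => ((zkL1 c m k / (2*(k:ℝ)^2) : ℝ) : ℂ)) atTop
        (nhds ((1:ℝ):ℂ)) := (Complex.continuous_ofReal.tendsto _).comp hreal
    rw [show ((1:ℝ):ℂ) = 1 from by norm_num] at hC
    apply hC.congr
    intro kk
    push_cast
    ring
  · have hreal : Tendsto (fun k : ℕ => zkL2 c m k / (-(k:ℝ))) atTop (nhds 1) := by
      apply zkTendsto (A := c+1)
      filter_upwards [eventually_ge_atTop (max (max K1 K2) 1)] with k hk
      obtain ⟨hf1, hf2, hl1a, hl1b, hl2a, hl2b, hb1, hb2, hNb, hDb, hNneg, hDneg,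
        hdisc, hkcr, hk1r⟩ := hfacts k hk
      have hkpos : (0:ℝ) < (k:ℝ) := by linarith
      rw [show zkL2 c m k / (-(k:ℝ)) - 1 = (-(zkL2 c m k + (k:ℝ)))/(k:ℝ) from
        by field_simp [hkpos.ne']; ring]
      rw [abs_div, abs_of_pos hkpos, abs_neg, div_le_div_iff₀ hkpos hkpos]
      have habs : |zkL2 c m k + (k:ℝ)| ≤ c/4 + 1 := by
        rw [abs_le]
        constructor <;> linarith
      nlinarith [abs_nonneg (zkL2 c m k + (k:ℝ))]
    have hC : Tendsto (fun k : ℕ => ((zkL2 c m k / (-(k:ℝ)) : ℝ) : ℂ)) atTop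
        (nhds ((1:ℝ):ℂ)) := (Complex.continuous_ofReal.tendsto _).comp hreal
    rw [show ((1:ℝ):ℂ) = 1 from by norm_num] at hC
    apply hC.congr
    intro kk
    push_cast
    ring
  · have hreal : Tendsto (fun k : ℕ => (zkB c m k / 2) / (k:ℝ)) atTop (nhds 1) := by
      apply zkTendsto (A := c+1)
      filter_upwards [eventually_ge_atTop (max (max K1 K2) 1)] with k hk
      obtain ⟨hf1, hf2, hl1a, hl1b, hl2a, hl2b, hb1, hb2, hNb, hDb, hNneg, hDneg,
        hdisc, hkcr, hk1r⟩ := hfacts k hk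
      have hkpos : (0:ℝ) < (k:ℝ) := by linarith
      rw [show (zkB c m k / 2) / (k:ℝ) - 1 = (zkB c m k / 2 - (k:ℝ))/(k:ℝ) from
        by field_simp]
      rw [abs_div, abs_of_pos hkpos, div_le_div_iff₀ hkpos hkpos]
      have habs : |zkB c m k / 2 - (k:ℝ)| ≤ c + 1 := by
        rw [abs_le]
        constructor <;> linarith
      nlinarith [abs_nonneg (zkB c m k / 2 - (k:ℝ))]
    apply hreal.congr
    intro kk
    rw [zkL3_re]
  · have hNt : Tendsto (fun k : ℕ => zkN c m k / (k:ℝ)^4) atTop (nhds (-(2*c))) := by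
      apply zkTendsto (A := (2*c+5)^2)
      filter_upwards [eventually_ge_atTop (max (max K1 K2) 1)] with k hk
      obtain ⟨hf1, hf2, hl1a, hl1b, hl2a, hl2b, hb1, hb2, hNb, hDb, hNneg, hDneg,
        hdisc, hkcr, hk1r⟩ := hfacts k hk
      have hkpos : (0:ℝ) < (k:ℝ) := by linarith
      have h4 : (0:ℝ) < (k:ℝ)^4 := by positivity
      rw [show zkN c m k / (k:ℝ)^4 - (-(2*c)) = (zkN c m k + 2*c*(k:ℝ)^4)/(k:ℝ)^4 from
        by field_simp; ring]
      rw [abs_div, abs_of_pos h4, div_le_div_iff₀ h4 hkpos]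
      calc |zkN c m k + 2*c*(k:ℝ)^4| * (k:ℝ) ≤ ((2*c+5)^2*(k:ℝ)^3) * (k:ℝ) := by
            apply mul_le_mul_of_nonneg_right hNb hkpos.le
      _ = (2*c+5)^2 * (k:ℝ)^4 := by ring
    have hDt : Tendsto (fun k : ℕ => zkD c m k / (k:ℝ)^3) atTop (nhds (-4)) := by
      apply zkTendsto (A := 2*c+6)
      filter_upwards [eventually_ge_atTop (max (max K1 K2) 1)] with k hk
      obtain ⟨hf1, hf2, hl1a, hl1b, hl2a, hl2b, hb1, hb2, hNb, hDb, hNneg, hDneg,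
        hdisc, hkcr, hk1r⟩ := hfacts k hk
      have hkpos : (0:ℝ) < (k:ℝ) := by linarith
      have h3 : (0:ℝ) < (k:ℝ)^3 := by positivity
      rw [show zkD c m k / (k:ℝ)^3 - (-4) = (zkD c m k + 4*(k:ℝ)^3)/(k:ℝ)^3 from
        by field_simp; ring]
      rw [abs_div, abs_of_pos h3, div_le_div_iff₀ h3 hkpos]
      calc |zkD c m k + 4*(k:ℝ)^3| * (k:ℝ) ≤ ((2*c+6)*(k:ℝ)^2) * (k:ℝ) := by
            apply mul_le_mul_of_nonneg_right hDb hkpos.le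
      _ = (2*c+6) * (k:ℝ)^3 := by ring
    have hlim := (hNt.div hDt (by norm_num : (-4:ℝ) ≠ 0)).mul_const (2/c)
    rw [show (-(2*c))/(-4)*(2/c) = (1:ℝ) from by field_simp; ring] at hlim
    have hqt : Tendsto (fun k : ℕ => zkDisc c m k / (c*(k:ℝ)/2)) atTop (nhds 1) := by
      apply Tendsto.congr' _ hlim
      filter_upwards [eventually_ge_atTop (max (max K1 K2) 1)] with k hk
      obtain ⟨hf1, hf2, hl1a, hl1b, hl2a, hl2b, hb1, hb2, hNb, hDb, hNneg, hDneg,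
        hdisc, hkcr, hk1r⟩ := hfacts k hk
      have hkpos : (0:ℝ) < (k:ℝ) := by linarith
      have hDne : zkD c m k ≠ 0 := ne_of_lt hDneg
      have hkne : (k:ℝ) ≠ 0 := ne_of_gt hkpos
      simp only [Pi.div_apply]
      unfold zkDisc
      field_simp
    have hsq : Tendsto (fun k : ℕ => Real.sqrt (zkDisc c m k / (c*(k:ℝ)/2))) atTop
        (nhds 1) := by
      have h1 := (Real.continuous_sqrt.tendsto 1).comp hqt
      simpa [Real.sqrt_one, Function.comp_def] using h1
    have hEsqrt : Real.sqrt c = ‖E‖ := by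
      rw [hcdef]
      exact Real.sqrt_sq (norm_nonneg E)
    have himt : Tendsto (fun k : ℕ => Real.sqrt (zkDisc c m k)
        / (‖E‖ * Real.sqrt ((k:ℝ)/2))) atTop (nhds 1) := by
      apply Tendsto.congr' _ hsq
      filter_upwards [eventually_ge_atTop (max (max K1 K2) 1)] with k hk
      obtain ⟨hf1, hf2, hl1a, hl1b, hl2a, hl2b, hb1, hb2, hNb, hDb, hNneg, hDneg,
        hdisc, hkcr, hk1r⟩ := hfacts k hk
      rw [Real.sqrt_div hdisc.le, show c*(k:ℝ)/2 = c*((k:ℝ)/2) from by ring,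
        Real.sqrt_mul hc.le, hEsqrt]
    apply himt.congr
    intro kk
    rw [zkL3_im]
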